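/- For every natural number k, the integral ∫_0^∞ e^{-x} L_k(x)^3 dx equals (-1)^k Σ_{j=0}^{k} C(k,j)^3, i.e. up to sign the Franel number Σ_j C(k,j)^3. -/

import Mathlib

/-- The simple Laguerre polynomial `L_a(x) = ∑_{α=0}^{a} (-1)^α C(a,α) x^α / α!`. -/
noncomputable def laguerre (a : ℕ) (x : ℝ) : ℝ :=
  ∑ α ∈ Finset.range (a + 1), (-1 : ℝ) ^ α * (Nat.choose a α : ℝ) * x ^ α / (Nat.factorial α : ℝ)

open Finset

lemma lemA : ∀ (K n m : ℕ),
    ∑ c ∈ range (K+1), (-1:ℤ)^c * (K.choose c) * ((n+c).choose m)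
      = (-1:ℤ)^K * (if K ≤ m then ((n.choose (m-K)) : ℤ) else 0) := by
  intro K
  induction K with
  | zero => intro n m; simp
  | succ K ih =>
    intro n m
    have key : ∑ c ∈ range (K+2), (-1:ℤ)^c * ((K+1).choose c) * ((n+c).choose m)
        = (∑ c ∈ range (K+1), (-1:ℤ)^c * (K.choose c) * ((n+c).choose m))
          - ∑ c ∈ range (K+1), (-1:ℤ)^c * (K.choose c) * (((n+1)+c).choose m) := by
      have hS1 : ∑ c ∈ range (K+2), (-1:ℤ)^c * (K.choose c) * ((n+c).choose m)
          = ∑ c ∈ range (K+1), (-1:ℤ)^c * (K.choose c) * ((n+c).choose m) := by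
        rw [Finset.sum_range_succ]
        simp [Nat.choose_succ_self]
      rw [Finset.sum_range_succ' (fun c => (-1:ℤ)^c * ((K+1).choose c) * ((n+c).choose m))]
      rw [← hS1, Finset.sum_range_succ' (fun c => (-1:ℤ)^c * (K.choose c) * ((n+c).choose m))]
      have : ∀ i ∈ range (K+1), (-1:ℤ)^(i+1) * ((K+1).choose (i+1)) * ((n+(i+1)).choose m)
          = (-1:ℤ)^(i+1) * (K.choose i) * ((n+(i+1)).choose m)
            + (-1:ℤ)^(i+1) * (K.choose (i+1)) * ((n+(i+1)).choose m) := by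
        intro i _
        have h := Nat.choose_succ_succ K i
        push_cast [h]
        ring
      rw [Finset.sum_congr rfl this, Finset.sum_add_distrib]
      have hre : ∑ i ∈ range (K+1), (-1:ℤ)^(i+1) * (K.choose i) * ((n+(i+1)).choose m)
          = - ∑ c ∈ range (K+1), (-1:ℤ)^c * (K.choose c) * (((n+1)+c).choose m) := by
        rw [← Finset.sum_neg_distrib]
        apply Finset.sum_congr rfl
        intro i _
        have : n + (i+1) = (n+1) + i := by ring
        rw [this]; ring
      rw [hre]
      simp only [Nat.choose_zero_right, Nat.cast_one]
      ring
    rw [key, ih n m, ih (n+1) m]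
    by_cases h1 : K + 1 ≤ m
    · have hK : K ≤ m := Nat.le_of_succ_le h1
      rw [if_pos hK, if_pos hK, if_pos h1]
      have hr : m - K = (m - (K+1)) + 1 := by omega
      rw [hr]
      have : ((n+1).choose ((m-(K+1))+1) : ℤ)
          = (n.choose (m-(K+1)) : ℤ) + (n.choose ((m-(K+1))+1) : ℤ) := by
        exact_mod_cast congrArg (Nat.cast (R := ℤ)) (Nat.choose_succ_succ n (m-(K+1)))
      rw [this]
      ring
    · by_cases h2 : K ≤ m
      · have hm : m = K := by omega
        rw [if_pos h2, if_pos h2, if_neg h1, hm]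
        simp
      · rw [if_neg h2, if_neg h2, if_neg h1]
        ring

lemma lemA1 (K n : ℕ) :
    ∑ c ∈ range (K+1), (-1:ℤ)^c * (K.choose c) * ((n+c).choose n)
      = (-1:ℤ)^K * (n.choose K) := by
  rw [lemA K n n]
  by_cases h : K ≤ n
  · rw [if_pos h, Nat.choose_symm h]
  · rw [if_neg h, Nat.choose_eq_zero_of_lt (by omega)]
    simp

lemma lemU (i j a : ℕ) :
    ∑ b ∈ range (i+j+1), (-1:ℤ)^b * ((i+j).choose b) * (b.choose j) * ((a+b).choose a)
      = (-1:ℤ)^(i+j) * ((i+j).choose j) * (if i ≤ a then ((a+j).choose (a-i) : ℤ) else 0) := by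
  have hsub : Finset.Ico j (i+j+1) ⊆ range (i+j+1) := by
    intro x hx; simp at hx ⊢; omega
  rw [← Finset.sum_subset hsub (by
    intro x hx hnx
    simp only [Finset.mem_Ico, Finset.mem_range] at hx hnx
    have : x < j := by omega
    rw [Nat.choose_eq_zero_of_lt this]
    simp)]
  rw [Finset.sum_Ico_eq_sum_range]
  have hlen : i + j + 1 - j = i + 1 := by omega
  rw [hlen]
  have step : ∀ d ∈ range (i+1),
      (-1:ℤ)^(j+d) * ((i+j).choose (j+d)) * ((j+d).choose j) * ((a+(j+d)).choose a)
        = ((-1:ℤ)^j * ((i+j).choose j)) * ((-1:ℤ)^d * (i.choose d) * (((a+j)+d).choose a)) := by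
    intro d hd
    simp only [Finset.mem_range] at hd
    have hc : (i+j).choose (j+d) * (j+d).choose j = (i+j).choose j * i.choose d := by
      have := Nat.choose_mul (n := i+j) (show j ≤ j+d by omega)
      simpa [Nat.add_sub_cancel_left, show i+j-j = i by omega] using this
    have hc' : ((i+j).choose (j+d) : ℤ) * ((j+d).choose j) = ((i+j).choose j : ℤ) * (i.choose d) := by
      exact_mod_cast congrArg (Nat.cast (R := ℤ)) hc
    have hx : a + (j+d) = (a+j)+d := by ring
    rw [hx]
    calc (-1:ℤ)^(j+d) * ((i+j).choose (j+d)) * ((j+d).choose j) * (((a+j)+d).choose a)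
        = (-1:ℤ)^(j+d) * (((i+j).choose (j+d) : ℤ) * ((j+d).choose j)) * (((a+j)+d).choose a) := by ring
      _ = (-1:ℤ)^(j+d) * (((i+j).choose j : ℤ) * (i.choose d)) * (((a+j)+d).choose a) := by rw [hc']
      _ = ((-1:ℤ)^j * ((i+j).choose j)) * ((-1:ℤ)^d * (i.choose d) * (((a+j)+d).choose a)) := by
          rw [pow_add]; ring
  rw [Finset.sum_congr rfl step, ← Finset.mul_sum, lemA i (a+j) a]
  rw [pow_add]
  ring

lemma lemV (i j : ℕ) :
    ∑ a ∈ range (i+j+1), (-1:ℤ)^a * ((i+j).choose a) * (a.choose i)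
        * (if i ≤ a then (((a+j).choose (a-i)) : ℤ) else 0)
      = (-1:ℤ)^(i+j) * ((i+j).choose i)^2 := by
  have hsub : Finset.Ico i (i+j+1) ⊆ range (i+j+1) := by
    intro x hx; simp at hx ⊢; omega
  rw [← Finset.sum_subset hsub (by
    intro x hx hnx
    simp only [Finset.mem_Ico, Finset.mem_range] at hx hnx
    have : x < i := by omega
    rw [Nat.choose_eq_zero_of_lt this]
    simp)]
  rw [Finset.sum_Ico_eq_sum_range]
  have hlen : i + j + 1 - i = j + 1 := by omega
  rw [hlen]
  have step : ∀ e ∈ range (j+1),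
      (-1:ℤ)^(i+e) * ((i+j).choose (i+e)) * ((i+e).choose i)
          * (if i ≤ i+e then ((((i+e)+j).choose ((i+e)-i)) : ℤ) else 0)
        = ((-1:ℤ)^i * ((i+j).choose i)) * ((-1:ℤ)^e * (j.choose e) * (((i+j)+e).choose (i+j))) := by
    intro e he
    simp only [Finset.mem_range] at he
    rw [if_pos (by omega : i ≤ i+e)]
    have h1 : (i+e)-i = e := by omega
    rw [h1]
    have hc : (i+j).choose (i+e) * (i+e).choose i = (i+j).choose i * j.choose e := by
      have := Nat.choose_mul (n := i+j) (show i ≤ i+e by omega)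
      simpa [show i+j-i = j by omega, show i+e-i = e by omega] using this
    have hc' : ((i+j).choose (i+e) : ℤ) * ((i+e).choose i) = ((i+j).choose i : ℤ) * (j.choose e) := by
      exact_mod_cast congrArg (Nat.cast (R := ℤ)) hc
    have hsym : ((i+e)+j).choose e = ((i+j)+e).choose (i+j) := by
      have h2 : (i+e)+j = e + (i+j) := by ring
      have h3 : (i+j)+e = e + (i+j) := by ring
      rw [h2, h3, Nat.choose_symm_add]
    rw [hsym]
    calc (-1:ℤ)^(i+e) * ((i+j).choose (i+e)) * ((i+e).choose i) * (((i+j)+e).choose (i+j))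
        = (-1:ℤ)^(i+e) * (((i+j).choose (i+e) : ℤ) * ((i+e).choose i)) * (((i+j)+e).choose (i+j)) := by ring
      _ = (-1:ℤ)^(i+e) * (((i+j).choose i : ℤ) * (j.choose e)) * (((i+j)+e).choose (i+j)) := by rw [hc']
      _ = ((-1:ℤ)^i * ((i+j).choose i)) * ((-1:ℤ)^e * (j.choose e) * (((i+j)+e).choose (i+j))) := by
          rw [pow_add]; ring
  rw [Finset.sum_congr rfl step, ← Finset.mul_sum, lemA j (i+j) (i+j)]
  rw [if_pos (by omega : j ≤ i+j), show i+j-j = i by omega, pow_add]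
  ring

lemma lemW (i j : ℕ) :
    ∑ a ∈ range (i+j+1), ∑ b ∈ range (i+j+1),
      ((-1:ℤ)^a * ((i+j).choose a) * (a.choose i))
        * ((-1:ℤ)^b * ((i+j).choose b) * (b.choose j) * ((a+b).choose a))
      = (((i+j).choose i : ℤ))^3 := by
  have inner : ∀ a ∈ range (i+j+1),
      ∑ b ∈ range (i+j+1),
        ((-1:ℤ)^a * ((i+j).choose a) * (a.choose i))
          * ((-1:ℤ)^b * ((i+j).choose b) * (b.choose j) * ((a+b).choose a))
      = ((-1:ℤ)^a * ((i+j).choose a) * (a.choose i))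
          * ((-1:ℤ)^(i+j) * ((i+j).choose j) * (if i ≤ a then ((a+j).choose (a-i) : ℤ) else 0)) := by
    intro a _
    rw [← Finset.mul_sum, ← lemU i j a]
  rw [Finset.sum_congr rfl inner]
  have rearr : ∀ a ∈ range (i+j+1),
      ((-1:ℤ)^a * ((i+j).choose a) * (a.choose i))
          * ((-1:ℤ)^(i+j) * ((i+j).choose j) * (if i ≤ a then ((a+j).choose (a-i) : ℤ) else 0))
      = ((-1:ℤ)^(i+j) * ((i+j).choose j))
          * ((-1:ℤ)^a * ((i+j).choose a) * (a.choose i) * (if i ≤ a then ((a+j).choose (a-i) : ℤ) else 0)) := by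
    intro a _; ring
  rw [Finset.sum_congr rfl rearr, ← Finset.mul_sum, lemV i j]
  have : (i+j).choose j = (i+j).choose i := (Nat.choose_symm_add).symm
  rw [this]
  have : ((-1:ℤ)^(i+j)) * ((-1:ℤ)^(i+j)) = 1 := by
    rw [← pow_add]; exact Even.neg_one_pow ⟨i+j, by ring⟩
  linear_combination (((i+j).choose i : ℤ))^3 * this

lemma lemB (k : ℕ) :
    ∑ a ∈ range (k+1), ∑ b ∈ range (k+1),
      (-1:ℤ)^(a+b) * (k.choose a) * (k.choose b) * ((a+b).choose a) * ((a+b).choose k)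
      = ∑ j ∈ range (k+1), ((k.choose j : ℤ))^3 := by
  have vand : ∀ a b : ℕ, (((a+b).choose k : ℤ))
      = ∑ ij ∈ Finset.HasAntidiagonal.antidiagonal k, (a.choose ij.1 : ℤ) * (b.choose ij.2) := by
    intro a b
    have := Nat.add_choose_eq a b k
    exact_mod_cast congrArg (Nat.cast (R := ℤ)) this
  have step1 : ∀ a ∈ range (k+1), ∀ b ∈ range (k+1),
      (-1:ℤ)^(a+b) * (k.choose a) * (k.choose b) * ((a+b).choose a) * ((a+b).choose k)
      = ∑ ij ∈ Finset.HasAntidiagonal.antidiagonal k,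
          ((-1:ℤ)^a * (k.choose a) * (a.choose ij.1))
            * ((-1:ℤ)^b * (k.choose b) * (b.choose ij.2) * ((a+b).choose a)) := by
    intro a _ b _
    rw [vand a b, Finset.mul_sum]
    apply Finset.sum_congr rfl
    intro ij _
    rw [pow_add]; ring
  calc ∑ a ∈ range (k+1), ∑ b ∈ range (k+1),
        (-1:ℤ)^(a+b) * (k.choose a) * (k.choose b) * ((a+b).choose a) * ((a+b).choose k)
      = ∑ a ∈ range (k+1), ∑ b ∈ range (k+1), ∑ ij ∈ Finset.HasAntidiagonal.antidiagonal k,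
          ((-1:ℤ)^a * (k.choose a) * (a.choose ij.1))
            * ((-1:ℤ)^b * (k.choose b) * (b.choose ij.2) * ((a+b).choose a)) := by
        apply Finset.sum_congr rfl; intro a ha
        apply Finset.sum_congr rfl; intro b hb
        exact step1 a ha b hb
    _ = ∑ ij ∈ Finset.HasAntidiagonal.antidiagonal k, ∑ a ∈ range (k+1), ∑ b ∈ range (k+1),
          ((-1:ℤ)^a * (k.choose a) * (a.choose ij.1))
            * ((-1:ℤ)^b * (k.choose b) * (b.choose ij.2) * ((a+b).choose a)) := by
        have h1 : ∀ a ∈ range (k+1),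
            (∑ b ∈ range (k+1), ∑ ij ∈ Finset.HasAntidiagonal.antidiagonal k,
              ((-1:ℤ)^a * (k.choose a) * (a.choose ij.1))
                * ((-1:ℤ)^b * (k.choose b) * (b.choose ij.2) * ((a+b).choose a)))
            = ∑ ij ∈ Finset.HasAntidiagonal.antidiagonal k, ∑ b ∈ range (k+1),
              ((-1:ℤ)^a * (k.choose a) * (a.choose ij.1))
                * ((-1:ℤ)^b * (k.choose b) * (b.choose ij.2) * ((a+b).choose a)) :=
          fun a _ => Finset.sum_comm
        rw [Finset.sum_congr rfl h1, Finset.sum_comm]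
    _ = ∑ ij ∈ Finset.HasAntidiagonal.antidiagonal k, ((k.choose ij.1 : ℤ))^3 := by
        apply Finset.sum_congr rfl
        intro ij hij
        obtain ⟨i, j⟩ := ij
        have hk : i + j = k := Finset.HasAntidiagonal.mem_antidiagonal.mp hij
        subst hk
        exact lemW i j
    _ = ∑ j ∈ range (k+1), ((k.choose j : ℤ))^3 := by
        rw [Finset.Nat.sum_antidiagonal_eq_sum_range_succ_mk]

lemma lemC (k : ℕ) :
    ∑ a ∈ range (k+1), ∑ b ∈ range (k+1), ∑ c ∈ range (k+1),
      (-1:ℤ)^(a+b+c) * (k.choose a) * (k.choose b) * (k.choose c)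
        * ((a+b).choose a) * ((a+b+c).choose (a+b))
      = (-1:ℤ)^k * ∑ j ∈ range (k+1), ((k.choose j : ℤ))^3 := by
  have inner : ∀ a ∈ range (k+1), ∀ b ∈ range (k+1),
      ∑ c ∈ range (k+1),
        (-1:ℤ)^(a+b+c) * (k.choose a) * (k.choose b) * (k.choose c)
          * ((a+b).choose a) * ((a+b+c).choose (a+b))
      = (-1:ℤ)^k * ((-1:ℤ)^(a+b) * (k.choose a) * (k.choose b) * ((a+b).choose a) * ((a+b).choose k)) := by
    intro a _ b _
    have h : ∀ c ∈ range (k+1),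
        (-1:ℤ)^(a+b+c) * (k.choose a) * (k.choose b) * (k.choose c)
          * ((a+b).choose a) * ((a+b+c).choose (a+b))
        = ((-1:ℤ)^(a+b) * (k.choose a) * (k.choose b) * ((a+b).choose a))
            * ((-1:ℤ)^c * (k.choose c) * (((a+b)+c).choose (a+b))) := by
      intro c _
      rw [pow_add]
      ring
    rw [Finset.sum_congr rfl h, ← Finset.mul_sum, lemA1 k (a+b)]
    ring
  calc ∑ a ∈ range (k+1), ∑ b ∈ range (k+1), ∑ c ∈ range (k+1),
        (-1:ℤ)^(a+b+c) * (k.choose a) * (k.choose b) * (k.choose c)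
          * ((a+b).choose a) * ((a+b+c).choose (a+b))
      = ∑ a ∈ range (k+1), ∑ b ∈ range (k+1),
          (-1:ℤ)^k * ((-1:ℤ)^(a+b) * (k.choose a) * (k.choose b) * ((a+b).choose a) * ((a+b).choose k)) := by
        apply Finset.sum_congr rfl; intro a ha
        apply Finset.sum_congr rfl; intro b hb
        exact inner a ha b hb
    _ = (-1:ℤ)^k * ∑ a ∈ range (k+1), ∑ b ∈ range (k+1),
          (-1:ℤ)^(a+b) * (k.choose a) * (k.choose b) * ((a+b).choose a) * ((a+b).choose k) := by
        rw [Finset.mul_sum]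
        apply Finset.sum_congr rfl; intro a _
        rw [Finset.mul_sum]
    _ = (-1:ℤ)^k * ∑ j ∈ range (k+1), ((k.choose j : ℤ))^3 := by rw [lemB]

open MeasureTheory

lemma integrable_exp_neg_pow (n : ℕ) :
    IntegrableOn (fun x : ℝ => Real.exp (-x) * x ^ n) (Set.Ioi 0) := by
  have h := Real.GammaIntegral_convergent (show (0:ℝ) < (n:ℝ)+1 by positivity)
  refine h.congr_fun ?_ measurableSet_Ioi
  intro x hx
  simp only
  rw [show ((n:ℝ)+1-1) = (n:ℝ) by ring, Real.rpow_natCast]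

lemma integral_exp_neg_pow (n : ℕ) :
    ∫ x in Set.Ioi (0:ℝ), Real.exp (-x) * x ^ n = (Nat.factorial n : ℝ) := by
  have h := Real.Gamma_eq_integral (show (0:ℝ) < (n:ℝ)+1 by positivity)
  rw [Real.Gamma_nat_eq_factorial] at h
  rw [h]
  apply MeasureTheory.setIntegral_congr_fun measurableSet_Ioi
  intro x hx
  simp only
  rw [show ((n:ℝ)+1-1) = (n:ℝ) by ring, Real.rpow_natCast]

theorem laguerre_cube_integral_franel (k : ℕ) :
    ∫ x in Set.Ioi (0 : ℝ), Real.exp (-x) * (laguerre k x) ^ 3 =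
      (-1 : ℝ) ^ k * ∑ j ∈ Finset.range (k + 1), ((Nat.choose k j : ℝ)) ^ 3 := by
  have expand : ∀ x : ℝ, Real.exp (-x) * (laguerre k x) ^ 3
      = ∑ a ∈ range (k+1), ∑ b ∈ range (k+1), ∑ c ∈ range (k+1),
          ((-1:ℝ)^a * (k.choose a) / (Nat.factorial a))
            * ((-1:ℝ)^b * (k.choose b) / (Nat.factorial b))
            * ((-1:ℝ)^c * (k.choose c) / (Nat.factorial c))
            * (Real.exp (-x) * x ^ (a+b+c)) := by
    intro x
    unfold laguerre
    rw [pow_succ, pow_two, Finset.sum_mul_sum, Finset.sum_mul, Finset.mul_sum]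
    apply Finset.sum_congr rfl; intro a _
    rw [Finset.sum_mul, Finset.mul_sum]
    apply Finset.sum_congr rfl; intro b _
    rw [Finset.mul_sum, Finset.mul_sum]
    apply Finset.sum_congr rfl; intro c _
    rw [pow_add, pow_add]
    ring
  have hint : ∀ (r : ℝ) (n : ℕ),
      Integrable (fun x : ℝ => r * (Real.exp (-x) * x ^ n)) (volume.restrict (Set.Ioi 0)) :=
    fun r n => (integrable_exp_neg_pow n).const_mul r
  calc ∫ x in Set.Ioi (0 : ℝ), Real.exp (-x) * (laguerre k x) ^ 3
      = ∫ x in Set.Ioi (0 : ℝ), ∑ a ∈ range (k+1), ∑ b ∈ range (k+1), ∑ c ∈ range (k+1),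
          ((-1:ℝ)^a * (k.choose a) / (Nat.factorial a))
            * ((-1:ℝ)^b * (k.choose b) / (Nat.factorial b))
            * ((-1:ℝ)^c * (k.choose c) / (Nat.factorial c))
            * (Real.exp (-x) * x ^ (a+b+c)) := by
        apply MeasureTheory.setIntegral_congr_fun measurableSet_Ioi
        intro x _
        exact expand x
    _ = ∑ a ∈ range (k+1), ∑ b ∈ range (k+1), ∑ c ∈ range (k+1),
          ((-1:ℝ)^a * (k.choose a) / (Nat.factorial a))
            * ((-1:ℝ)^b * (k.choose b) / (Nat.factorial b))
            * ((-1:ℝ)^c * (k.choose c) / (Nat.factorial c))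
            * (Nat.factorial (a+b+c) : ℝ) := by
        rw [MeasureTheory.integral_finset_sum _ (fun a _ => by
          apply integrable_finset_sum
          intro b _
          apply integrable_finset_sum
          intro c _
          exact hint _ _)]
        apply Finset.sum_congr rfl; intro a _
        rw [MeasureTheory.integral_finset_sum _ (fun b _ => by
          apply integrable_finset_sum
          intro c _
          exact hint _ _)]
        apply Finset.sum_congr rfl; intro b _
        rw [MeasureTheory.integral_finset_sum _ (fun c _ => hint _ _)]
        apply Finset.sum_congr rfl; intro c _
        rw [MeasureTheory.integral_const_mul, integral_exp_neg_pow]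
    _ = ((∑ a ∈ range (k+1), ∑ b ∈ range (k+1), ∑ c ∈ range (k+1),
          (-1:ℤ)^(a+b+c) * (k.choose a) * (k.choose b) * (k.choose c)
            * ((a+b).choose a) * ((a+b+c).choose (a+b)) : ℤ) : ℝ) := by
        push_cast
        apply Finset.sum_congr rfl; intro a _
        apply Finset.sum_congr rfl; intro b _
        apply Finset.sum_congr rfl; intro c _
        have f1 : (Nat.factorial (a+b) : ℝ) = ((a+b).choose a) * (Nat.factorial a) * (Nat.factorial b) := by
          have := Nat.choose_mul_factorial_mul_factorial (show a ≤ a+b by omega)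
          rw [show a+b-a = b by omega] at this
          exact_mod_cast this.symm
        have f2 : (Nat.factorial (a+b+c) : ℝ)
            = ((a+b+c).choose (a+b)) * (Nat.factorial (a+b)) * (Nat.factorial c) := by
          have := Nat.choose_mul_factorial_mul_factorial (show a+b ≤ a+b+c by omega)
          rw [show a+b+c-(a+b) = c by omega] at this
          exact_mod_cast this.symm
        rw [f2, f1, pow_add, pow_add]
        have ha := Nat.factorial_pos a
        have hb := Nat.factorial_pos b
        have hc := Nat.factorial_pos c
        field_simp
    _ = (((-1:ℤ)^k * ∑ j ∈ range (k+1), ((k.choose j : ℤ))^3 : ℤ) : ℝ) := by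
        exact_mod_cast lemC k
    _ = (-1 : ℝ) ^ k * ∑ j ∈ Finset.range (k + 1), ((Nat.choose k j : ℝ)) ^ 3 := by
        push_cast
        ring
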